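/- On a nonempty compact convex subset X of ℝ^n with the free disposal property, the leximin-maximal element exists: there is r ∈ X maximizing the sorted (nondecreasing) rate vector in lexicographic order, and such an r is max-min fair on X. -/

import Mathlib

/-- The coordinates of `r` sorted in nondecreasing order. -/
noncomputable def sortedVec {n : ℕ} (r : Fin n → ℝ) : Fin n → ℝ :=
  r ∘ Tuple.sort r

/-- Lexicographic (≤) comparison of vectors on `Fin n → ℝ`. -/
def LexLE {n : ℕ} (a b : Fin n → ℝ) : Prop :=
  a = b ∨ ∃ k : Fin n, (∀ j : Fin n, j < k → a j = b j) ∧ a k < b k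

/-- `r` is max-min fair on `X`. -/
def MaxMinFair {n : ℕ} (X : Set (Fin n → ℝ)) (r : Fin n → ℝ) : Prop :=
  r ∈ X ∧ ∀ s ∈ X, ∀ k, r k < s k → ∃ l, r l ≤ r k ∧ s l < r l

lemma sortedVec_monotone {n : ℕ} (v : Fin n → ℝ) : Monotone (sortedVec v) :=
  Tuple.monotone_sort v

lemma sortedVec_le_iff {n : ℕ} (v : Fin n → ℝ) (x : ℝ) (j : Fin n) :
    sortedVec v j ≤ x ↔ (j : ℕ) < Fintype.card {l // v l ≤ x} := by
  classical
  have h := Tuple.lt_card_le_iff_apply_le_of_monotone (f := v ∘ Tuple.sort v) (a := x)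
    (Tuple.monotone_sort v) (j := j)
  rw [show sortedVec v = v ∘ Tuple.sort v from rfl, ← h]
  have hc : Fintype.card {i // (v ∘ Tuple.sort v) i ≤ x} = Fintype.card {l // v l ≤ x} :=
    Fintype.card_congr ((Tuple.sort v).subtypeEquiv (fun i => Iff.rfl))
  rw [← Fintype.card_subtype, hc]

lemma sortedVec_sub_le {n : ℕ} {v w : Fin n → ℝ} {d : ℝ}
    (h : ∀ l, v l ≤ w l + d) (j : Fin n) : sortedVec v j ≤ sortedVec w j + d := by
  classical
  by_contra hlt
  push_neg at hlt
  have h1 : (j : ℕ) < Fintype.card {l // w l ≤ sortedVec w j} :=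
    (sortedVec_le_iff w (sortedVec w j) j).1 le_rfl
  have hmono : Fintype.card {l // w l ≤ sortedVec w j}
      ≤ Fintype.card {l // v l ≤ sortedVec w j + d} :=
    Fintype.card_subtype_mono _ _ (fun l hl => (h l).trans (by linarith))
  have h2 := (sortedVec_le_iff v (sortedVec w j + d) j).2 (lt_of_lt_of_le h1 hmono)
  linarith

lemma sortedVec_continuous {n : ℕ} (j : Fin n) :
    Continuous (fun v : Fin n → ℝ => sortedVec v j) := by
  have : LipschitzWith 1 (fun v : Fin n → ℝ => sortedVec v j) := by
    rw [lipschitzWith_iff_dist_le_mul]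
    intro a b
    rw [NNReal.coe_one, one_mul, Real.dist_eq, abs_sub_le_iff]
    have hab : ∀ l, a l ≤ b l + dist a b := by
      intro l
      have := dist_le_pi_dist a b l
      rw [Real.dist_eq, abs_sub_le_iff] at this
      linarith [this.1]
    have hba : ∀ l, b l ≤ a l + dist a b := by
      intro l
      have := dist_le_pi_dist a b l
      rw [Real.dist_eq, abs_sub_le_iff] at this
      linarith [this.2]
    constructor
    · linarith [sortedVec_sub_le hab j]
    · linarith [sortedVec_sub_le hba j]
  exact this.continuous

theorem leximin_max_exists_and_maxMinFair {n : ℕ} (X : Set (Fin n → ℝ))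
    (hne : X.Nonempty) (hcomp : IsCompact X) (hconv : Convex ℝ X)
    (hnonneg : ∀ r ∈ X, ∀ k, 0 ≤ r k)
    (hfd : ∀ s ∈ X, ∀ s' : Fin n → ℝ, (∀ k, 0 ≤ s' k) → (∀ k, s' k ≤ s k) → s' ∈ X) :
    ∃ r ∈ X, (∀ s ∈ X, LexLE (sortedVec s) (sortedVec r)) ∧ MaxMinFair X r := by
  classical
  -- Part 1: build the leximin maximizer by iterated argmax
  set Y : ℕ → Set (Fin n → ℝ) := fun m => Nat.rec X
    (fun m Ym => if h : m < n then
      {x ∈ Ym | ∀ y ∈ Ym, sortedVec y ⟨m, h⟩ ≤ sortedVec x ⟨m, h⟩} else Ym) m with hYdef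
  have hYsucc : ∀ m (h : m < n), Y (m + 1) =
      {x ∈ Y m | ∀ y ∈ Y m, sortedVec y ⟨m, h⟩ ≤ sortedVec x ⟨m, h⟩} := by
    intro m h
    simp only [hYdef, dif_pos h]
  have hYsucc' : ∀ m, ¬ m < n → Y (m + 1) = Y m := by
    intro m h
    simp only [hYdef, dif_neg h]
  have hprop : ∀ m, (Y m).Nonempty ∧ IsCompact (Y m) ∧ Y m ⊆ X := by
    intro m
    induction m with
    | zero => exact ⟨hne, hcomp, subset_rfl⟩
    | succ m ih =>
      obtain ⟨hne', hcomp', hsub'⟩ := ih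
      by_cases h : m < n
      · rw [hYsucc m h]
        obtain ⟨z, hz, hmax⟩ := hcomp'.exists_isMaxOn hne'
          ((sortedVec_continuous ⟨m, h⟩).continuousOn)
        refine ⟨⟨z, hz, fun y hy => hmax hy⟩, ?_, fun x hx => hsub' hx.1⟩
        have heq : {x ∈ Y m | ∀ y ∈ Y m, sortedVec y ⟨m, h⟩ ≤ sortedVec x ⟨m, h⟩}
            = Y m ∩ ⋂ y ∈ Y m, {x | sortedVec y ⟨m, h⟩ ≤ sortedVec x ⟨m, h⟩} := by
          ext x
          simp [Set.mem_iInter, Set.mem_setOf_eq]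
        rw [heq]
        exact hcomp'.inter_right (isClosed_biInter fun y _ =>
          isClosed_le continuous_const (sortedVec_continuous _))
      · rw [hYsucc' m h]; exact ⟨hne', hcomp', hsub'⟩
  have hanti : ∀ m, Y (m + 1) ⊆ Y m := by
    intro m
    by_cases h : m < n
    · rw [hYsucc m h]; exact fun x hx => hx.1
    · rw [hYsucc' m h]
  have hanti' : ∀ j m, j ≤ m → Y m ⊆ Y j := by
    intro j m hjm
    induction m with
    | zero => rw [Nat.le_zero.1 hjm]
    | succ m ih =>
      rcases Nat.lt_or_ge j (m + 1) with h | h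
      · exact fun x hx => ih (Nat.lt_succ_iff.1 h) (hanti m hx)
      · rw [Nat.le_antisymm hjm h]
  obtain ⟨r, hrYn⟩ := (hprop n).1
  have hrX : r ∈ X := (hprop n).2.2 hrYn
  have hrY : ∀ m, m ≤ n → r ∈ Y m := fun m hm => hanti' m n hm hrYn
  have hlexmax : ∀ s ∈ X, LexLE (sortedVec s) (sortedVec r) := by
    intro s hs
    by_cases heq : sortedVec s = sortedVec r
    · exact Or.inl heq
    · right
      have hex : ∃ m : ℕ, ∃ h : m < n, sortedVec s ⟨m, h⟩ ≠ sortedVec r ⟨m, h⟩ := by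
        obtain ⟨k, hk⟩ := Function.ne_iff.1 heq
        exact ⟨k.1, k.2, by simpa using hk⟩
      set N := Nat.find hex with hNdef
      obtain ⟨hN, hNne⟩ := Nat.find_spec hex
      have hmin : ∀ m, m < N → ∀ h : m < n, sortedVec s ⟨m, h⟩ = sortedVec r ⟨m, h⟩ := by
        intro m hm h
        have := Nat.find_min hex hm
        push_neg at this
        exact this h
      have hsY : ∀ m, m ≤ N → s ∈ Y m := by
        intro m hm
        induction m with
        | zero => exact hs
        | succ m ih =>
          have hmN : m < N := hm
          have hmn : m < n := lt_trans hmN hN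
          rw [hYsucc m hmn]
          refine ⟨ih (le_of_lt hmN), fun y hy => ?_⟩
          have hr1 : r ∈ Y (m + 1) := hrY (m + 1) hmn
          rw [hYsucc m hmn] at hr1
          calc sortedVec y ⟨m, hmn⟩ ≤ sortedVec r ⟨m, hmn⟩ := hr1.2 y hy
            _ = sortedVec s ⟨m, hmn⟩ := (hmin m hmN hmn).symm
      refine ⟨⟨N, hN⟩, fun j hj => ?_, ?_⟩
      · have : (j : ℕ) < N := hj
        have := hmin j.1 this j.2
        simpa using this
      · have hr1 : r ∈ Y (N + 1) := hrY (N + 1) hN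
        rw [hYsucc N hN] at hr1
        exact lt_of_le_of_ne (hr1.2 s (hsY N le_rfl)) hNne
  refine ⟨r, hrX, hlexmax, hrX, ?_⟩
  -- Part 2: max-min fairness
  intro s hs k hk
  by_contra hcon
  push_neg at hcon
  set c := r k with hcdef
  -- choose ε > 0 small enough
  set g : Fin n → ℝ := fun l =>
    if h : c < r l ∧ s l < r l then (r l - c) / (2 * (r l - s l)) else 1 with hgdef
  have hgpos : ∀ l, 0 < g l := by
    intro l
    rw [hgdef]
    dsimp only
    split
    · rename_i h
      exact div_pos (by linarith [h.1]) (by linarith [h.2])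
    · exact one_pos
  have huniv : (Finset.univ : Finset (Fin n)).Nonempty := ⟨k, Finset.mem_univ k⟩
  set ε : ℝ := min 1 (Finset.univ.inf' huniv g) with hεdef
  have hε0 : 0 < ε := lt_min one_pos ((Finset.lt_inf'_iff huniv).2 fun l _ => hgpos l)
  have hε1 : ε ≤ 1 := min_le_left _ _
  have hεg : ∀ l, ε ≤ g l := fun l =>
    le_trans (min_le_right _ _) (Finset.inf'_le g (Finset.mem_univ l))
  set t : Fin n → ℝ := fun l => (1 - ε) * r l + ε * s l with htdef
  have htX : t ∈ X := by
    have := hconv hrX hs (by linarith : (0:ℝ) ≤ 1 - ε) (le_of_lt hε0) (by ring)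
    exact this
  have htlow : ∀ l, r l ≤ c → r l ≤ t l := by
    intro l hl
    have hsl : r l ≤ s l := hcon l hl
    have : ε * r l ≤ ε * s l := mul_le_mul_of_nonneg_left hsl (le_of_lt hε0)
    simp only [htdef]
    nlinarith
  have htk : c < t k := by
    simp only [htdef]
    nlinarith [hk, hε0]
  have hthigh : ∀ l, c < r l → c < t l := by
    intro l hl
    by_cases hsl : s l < r l
    · have hg : g l = (r l - c) / (2 * (r l - s l)) := by
        rw [hgdef]; dsimp only; rw [dif_pos ⟨hl, hsl⟩]
      have hq : 0 < r l - s l := by linarith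
      have h1 : ε * (r l - s l) ≤ g l * (r l - s l) :=
        mul_le_mul_of_nonneg_right (hεg l) (le_of_lt hq)
      have h2 : g l * (r l - s l) = (r l - c) / 2 := by
        rw [hg]; field_simp
      have ht : t l = r l - ε * (r l - s l) := by simp only [htdef]; ring
      rw [ht]
      linarith
    · push_neg at hsl
      have : ε * r l ≤ ε * s l := mul_le_mul_of_nonneg_left hsl (le_of_lt hε0)
      simp only [htdef]
      nlinarith
  set u : Fin n → ℝ := fun l => if r l ≤ c then t l else min (t l) (r l) with hudef
  have huX : u ∈ X := by
    refine hfd t htX u (fun l => ?_) (fun l => ?_)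
    · simp only [hudef]
      split
      · exact hnonneg t htX l
      · exact le_min (hnonneg t htX l) (hnonneg r hrX l)
    · simp only [hudef]
      split
      · exact le_rfl
      · exact min_le_left _ _
  have hu1 : ∀ l, r l ≤ c → r l ≤ u l := by
    intro l hl
    simp only [hudef, if_pos hl]
    exact htlow l hl
  have huk : c < u k := by
    simp only [hudef]; rw [if_pos (show r k ≤ c from le_refl c)]
    exact htk
  have hu2 : ∀ l, c < r l → c < u l := by
    intro l hl
    simp only [hudef, if_neg (not_le.2 hl)]
    exact lt_min (hthigh l hl) hl
  -- counting argument
  have hAB : Fintype.card {l // u l ≤ c} < Fintype.card {l // r l ≤ c} := by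
    rw [Fintype.card_subtype, Fintype.card_subtype]
    apply Finset.card_lt_card
    constructor
    · intro l hl
      simp only [Finset.mem_filter, Finset.mem_univ, true_and] at hl ⊢
      by_contra hrl
      push_neg at hrl
      exact absurd hl (not_le.2 (hu2 l hrl))
    · intro hsub
      have hk1 : k ∈ Finset.univ.filter (fun l => r l ≤ c) := by
        simp [hcdef]
      have hk2 := hsub hk1
      simp only [Finset.mem_filter, Finset.mem_univ, true_and] at hk2
      exact absurd hk2 (not_le.2 huk)
  have hjlt : Fintype.card {l // u l ≤ c} < n := by
    have := Fintype.card_subtype_le (fun l : Fin n => r l ≤ c)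
    simp only [Fintype.card_fin] at this
    exact lt_of_lt_of_le hAB this
  set J : Fin n := ⟨Fintype.card {l // u l ≤ c}, hjlt⟩ with hJdef
  have hrJ : sortedVec r J ≤ c := (sortedVec_le_iff r c J).2 hAB
  have huJ : c < sortedVec u J := by
    by_contra hle
    push_neg at hle
    have := (sortedVec_le_iff u c J).1 hle
    simp only [hJdef] at this
    exact lt_irrefl _ this
  have hG : ∀ j : Fin n, sortedVec r j ≤ c → sortedVec r j ≤ sortedVec u j := by
    intro j hj
    by_contra hlt
    push_neg at hlt
    have h1 : (j : ℕ) < Fintype.card {l // u l ≤ sortedVec u j} :=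
      (sortedVec_le_iff u (sortedVec u j) j).1 le_rfl
    have hmono : Fintype.card {l // u l ≤ sortedVec u j}
        ≤ Fintype.card {l // r l ≤ sortedVec u j} := by
      apply Fintype.card_subtype_mono
      intro l hl
      by_cases hrl : r l ≤ c
      · exact le_trans (hu1 l hrl) hl
      · push_neg at hrl
        exact absurd (lt_of_lt_of_le (hu2 l hrl) hl) (by linarith)
    have h2 := (sortedVec_le_iff r (sortedVec u j) j).2 (lt_of_lt_of_le h1 hmono)
    linarith
  rcases hlexmax u huX with heq | ⟨j0, hbefore, hlt⟩
  · have := congrFun heq J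
    linarith
  · rcases le_or_gt j0 J with h | h
    · have h1 : sortedVec r j0 ≤ sortedVec r J := sortedVec_monotone r h
      have h2 := hG j0 (h1.trans hrJ)
      linarith
    · have := hbefore J h
      linarith
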